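/- Suppose the inf-sup condition holds with constant c > 0: for every nonzero v ∈ U, the supremum over w ∈ Z with T*w ≠ 0 of |⟨v, T*w⟩| / ‖T*w‖ is at least c‖v‖. Let b : H × H → ℝ be a symmetric positive semidefinite bilinear form that is spectrally equivalent to the form ⟨P·,·⟩, i.e., there are constants C_s ≥ c_s > 0 with c_s⟨P q, q⟩ ≤ b(q, q) ≤ C_s⟨P q, q⟩ for all q ∈ H. If û ∈ H and ũ ∈ U satisfies the modified (preconditioned) problem b(ũ, v) = b(û, v) for all v ∈ U, then ‖ũ − û‖ ≤ (1 + √C_s / (√c_s · c)) · inf over v ∈ U of ‖v − û‖. -/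

import Mathlib

open scoped RealInnerProductSpace

set_option maxHeartbeats 800000 in
/-- error estimate for the preconditioned (LL*)⁻¹ method: under the
inf-sup condition with constant `c > 0`, if `b` is a symmetric positive semidefinite
bilinear form spectrally equivalent to `⟪P·,·⟫` with constants `0 < c_s ≤ C_s`, and
`ũ ∈ U` satisfies `b(ũ, v) = b(û, v)` for all `v ∈ U`, then
`‖ũ − û‖ ≤ (1 + √C_s/(√c_s · c)) inf_{v ∈ U} ‖v − û‖`. -/
theorem preconditioned_llstar_inv_error_estimate
    {H : Type*} [NormedAddCommGroup H] [InnerProductSpace ℝ H] [CompleteSpace H]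
    (T : H →ₗ.[ℝ] H) (hdense : Dense (T.domain : Set H)) (hclosed : T.IsClosed)
    (Z : Submodule ℝ T.adjoint.domain) [FiniteDimensional ℝ Z]
    (W : Submodule ℝ H) (hW : W = Z.map T.adjoint.toFun)
    (P : H →ₗ[ℝ] H) (hPmem : ∀ q : H, P q ∈ W)
    (hPorth : ∀ q : H, ∀ w ∈ W, ⟪q - P q, w⟫ = 0)
    (U : Submodule ℝ H) [FiniteDimensional ℝ U]
    (c : ℝ) (hc : 0 < c)
    (hinfsup : ∀ v ∈ U, v ≠ 0 →
      c * ‖v‖ ≤ sSup {r : ℝ | ∃ w : T.adjoint.domain, w ∈ Z ∧ T.adjoint w ≠ 0 ∧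
        r = |⟪v, T.adjoint w⟫| / ‖T.adjoint w‖})
    (b : H →ₗ[ℝ] H →ₗ[ℝ] ℝ)
    (hbsymm : ∀ p q : H, b p q = b q p) (hbpsd : ∀ q : H, 0 ≤ b q q)
    (cs Cs : ℝ) (hcs : 0 < cs) (hcsCs : cs ≤ Cs)
    (hspec : ∀ q : H, cs * ⟪P q, q⟫ ≤ b q q ∧ b q q ≤ Cs * ⟪P q, q⟫)
    (uhat utilde : H) (hut : utilde ∈ U)
    (hweak : ∀ v ∈ U, b utilde v = b uhat v) :
    ‖utilde - uhat‖ ≤ (1 + Real.sqrt Cs / (Real.sqrt cs * c)) *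
      ⨅ v : U, ‖(v : H) - uhat‖ := by
  have hCs0 : (0:ℝ) ≤ Cs := le_trans hcs.le hcsCs
  have hscs : 0 < Real.sqrt cs := Real.sqrt_pos.mpr hcs
  set K := 1 + Real.sqrt Cs / (Real.sqrt cs * c) with hKdef
  have hsqnn : (0:ℝ) ≤ Real.sqrt Cs / (Real.sqrt cs * c) := by positivity
  have hK0 : 0 < K := by rw [hKdef]; linarith
  have hK1 : 1 ≤ K := by rw [hKdef]; linarith
  -- P q has ⟪P q, q⟫ = ‖P q‖²
  have hPq : ∀ q : H, ⟪P q, q⟫ = ‖P q‖ ^ 2 := by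
    intro q
    have h := hPorth q (P q) (hPmem q)
    rw [inner_sub_left] at h
    have h2 : ⟪q, P q⟫ = ⟪P q, P q⟫ := by linarith
    rw [real_inner_comm, h2, real_inner_self_eq_norm_sq]
  have hPnorm : ∀ q : H, ‖P q‖ ≤ ‖q‖ := by
    intro q
    rcases eq_or_ne (P q) 0 with h0 | h0
    · simp [h0]
    · have h1 : ‖P q‖ ^ 2 ≤ ‖P q‖ * ‖q‖ := by
        rw [← hPq q]; exact real_inner_le_norm _ _
      have h2 : 0 < ‖P q‖ := norm_pos_iff.mpr h0
      nlinarith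
  have key : ∀ v : U, ‖utilde - uhat‖ ≤ K * ‖(v : H) - uhat‖ := by
    intro v
    obtain ⟨e, hedef⟩ : ∃ e : H, e = utilde - (v : H) := ⟨_, rfl⟩
    obtain ⟨d, hddef⟩ : ∃ d : H, d = uhat - (v : H) := ⟨_, rfl⟩
    have heU : e ∈ U := by rw [hedef]; exact U.sub_mem hut v.2
    rcases eq_or_ne e 0 with he0 | he0
    · have hve : utilde = (v : H) := by
        rw [hedef, sub_eq_zero] at he0; exact he0
      rw [hve]
      nlinarith [norm_nonneg ((v : H) - uhat)]
    · -- inf-sup: c‖e‖ ≤ ‖P e‖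
      have hsup := hinfsup e heU he0
      have hsup2 : sSup {r : ℝ | ∃ w : T.adjoint.domain, w ∈ Z ∧ T.adjoint w ≠ 0 ∧
          r = |⟪e, T.adjoint w⟫| / ‖T.adjoint w‖} ≤ ‖P e‖ := by
        apply Real.sSup_le
        · rintro r ⟨w, hwZ, hw0, rfl⟩
          have hmem : (T.adjoint w : H) ∈ W := by
            rw [hW]; exact Submodule.mem_map.mpr ⟨w, hwZ, rfl⟩
          have horth := hPorth e _ hmem
          rw [inner_sub_left] at horth
          have hinner : ⟪e, (T.adjoint w : H)⟫ = ⟪P e, (T.adjoint w : H)⟫ := by linarith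
          rw [hinner, div_le_iff₀ (norm_pos_iff.mpr hw0)]
          exact abs_real_inner_le_norm _ _
        · exact norm_nonneg _
      have h1 : c * ‖e‖ ≤ ‖P e‖ := le_trans hsup hsup2
      -- Galerkin orthogonality
      have hbe : b e e = b d e := by
        have hw1 : b utilde e = b uhat e := hweak e heU
        have hg : b (utilde - (v : H)) e = b (uhat - (v : H)) e := by
          simp only [map_sub, LinearMap.sub_apply]
          linarith
        rw [← hedef] at hg
        rw [hddef]
        exact hg
      -- Cauchy–Schwarz for the psd form b
      have hCS : (b d e) ^ 2 ≤ b d d * b e e := by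
        have hq : ∀ t : ℝ, 0 ≤ b d d * (t * t) + (2 * b d e) * t + b e e := by
          intro t
          have hpsd := hbpsd (t • d + e)
          simp only [map_add, map_smul, LinearMap.add_apply, LinearMap.smul_apply,
            smul_eq_mul] at hpsd
          have hed : b e d = b d e := hbsymm e d
          rw [hed] at hpsd
          ring_nf at hpsd ⊢
          linarith
        have hdisc := discrim_le_zero hq
        rw [discrim] at hdisc
        nlinarith
      have hbede : b e e ≤ b d d := by
        have hsq : b e e ^ 2 ≤ b d d * b e e := by
          have h := hCS; rw [← hbe] at h; exact h
        nlinarith [hbpsd e, hbpsd d, hsq]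
      -- spectral equivalence
      have h2 : cs * ‖P e‖ ^ 2 ≤ b e e := by
        have := (hspec e).1; rwa [hPq e] at this
      have h3 : b d d ≤ Cs * ‖d‖ ^ 2 := by
        have hs := (hspec d).2
        have h4 : ⟪P d, d⟫ ≤ ‖d‖ ^ 2 := by
          rw [hPq d]
          exact pow_le_pow_left₀ (norm_nonneg _) (hPnorm d) 2
        calc b d d ≤ Cs * ⟪P d, d⟫ := hs
          _ ≤ Cs * ‖d‖ ^ 2 := mul_le_mul_of_nonneg_left h4 hCs0
      have hchain : cs * (c * ‖e‖) ^ 2 ≤ Cs * ‖d‖ ^ 2 := by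
        have hc1 : (c * ‖e‖) ^ 2 ≤ ‖P e‖ ^ 2 :=
          pow_le_pow_left₀ (by positivity) h1 2
        have := mul_le_mul_of_nonneg_left hc1 hcs.le
        linarith
      have hmain : ‖e‖ * (Real.sqrt cs * c) ≤ Real.sqrt Cs * ‖d‖ := by
        have hA : 0 ≤ ‖e‖ * (Real.sqrt cs * c) := by positivity
        have hB : 0 ≤ Real.sqrt Cs * ‖d‖ := by positivity
        have e1 : Real.sqrt cs ^ 2 = cs := Real.sq_sqrt hcs.le
        have e2 : Real.sqrt Cs ^ 2 = Cs := Real.sq_sqrt hCs0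
        have eL : (‖e‖ * (Real.sqrt cs * c)) ^ 2 = cs * (c * ‖e‖) ^ 2 := by
          rw [mul_pow, mul_pow, e1]; ring
        have eR : (Real.sqrt Cs * ‖d‖) ^ 2 = Cs * ‖d‖ ^ 2 := by
          rw [mul_pow, e2]
        have hsq2 : (‖e‖ * (Real.sqrt cs * c)) ^ 2 ≤ (Real.sqrt Cs * ‖d‖) ^ 2 := by
          rw [eL, eR]; exact hchain
        calc ‖e‖ * (Real.sqrt cs * c) = Real.sqrt ((‖e‖ * (Real.sqrt cs * c)) ^ 2) :=
              (Real.sqrt_sq hA).symm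
          _ ≤ Real.sqrt ((Real.sqrt Cs * ‖d‖) ^ 2) := Real.sqrt_le_sqrt hsq2
          _ = Real.sqrt Cs * ‖d‖ := Real.sqrt_sq hB
      have h6 : ‖e‖ ≤ Real.sqrt Cs / (Real.sqrt cs * c) * ‖d‖ := by
        rw [div_mul_eq_mul_div, le_div_iff₀ (by positivity : 0 < Real.sqrt cs * c)]
        linarith [hmain]
      have hdnorm : ‖d‖ = ‖(v : H) - uhat‖ := by rw [hddef, norm_sub_rev]
      have htri : ‖utilde - uhat‖ ≤ ‖e‖ + ‖(v : H) - uhat‖ := by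
        have heq : utilde - uhat = e + ((v : H) - uhat) := by rw [hedef]; abel
        rw [heq]; exact norm_add_le _ _
      rw [hdnorm] at h6
      rw [hKdef]
      nlinarith [norm_nonneg ((v : H) - uhat)]
  -- pass to the infimum
  have hle : ∀ v : U, ‖utilde - uhat‖ / K ≤ ‖(v : H) - uhat‖ := by
    intro v
    rw [div_le_iff₀ hK0]
    calc ‖utilde - uhat‖ ≤ K * ‖(v : H) - uhat‖ := key v
      _ = ‖(v : H) - uhat‖ * K := mul_comm _ _
  have hinf := le_ciInf hle
  exact (div_le_iff₀' hK0).mp hinf
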